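/- Let k be a Gaussian integer with |k| > 2.5, and let V, W be sequences of Gaussian integers with V_0 = 1, V_1 = 2k-1, V_{n+2} = 2k·V_{n+1} - V_n, and W_0 = 1, W_1 = 4k^2 - k - 2, W_{m+2} = 2(4k^2-2k-1)·W_{m+1} - W_m. If V_n = ±W_m for some n, m ≥ 0, then m ≤ n ≤ 3m + 2. -/

import Mathlib

open GaussianInt

set_option maxHeartbeats 1600000 in
theorem index_bounds (k : GaussianInt) (hk : (2.5 : ℝ) < ‖(k : ℂ)‖)
    (V W : ℕ → GaussianInt)
    (hV0 : V 0 = 1) (hV1 : V 1 = 2 * k - 1)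
    (hVrec : ∀ n, V (n + 2) = 2 * k * V (n + 1) - V n)
    (hW0 : W 0 = 1) (hW1 : W 1 = 4 * k ^ 2 - k - 2)
    (hWrec : ∀ m, W (m + 2) = 2 * (4 * k ^ 2 - 2 * k - 1) * W (m + 1) - W m)
    (n m : ℕ) (h : V n = W m ∨ V n = -W m) :
    m ≤ n ∧ n ≤ 3 * m + 2 := by
  set r : ℝ := ‖(k : ℂ)‖ with hrdef
  have hr : (2.5 : ℝ) < r := hk
  set z : ℂ := (k : ℂ) with hzdef
  -- basic triangle inequalities for Complex.abs
  have habs_add : ∀ x y : ℂ, ‖(x + y)‖ ≤ ‖x‖ + ‖y‖ := by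
    intro x y; simpa using norm_add_le x y
  have habs_sub : ∀ x y : ℂ, ‖(x - y)‖ ≤ ‖x‖ + ‖y‖ := by
    intro x y; simpa using norm_sub_le x y
  have hle_sub : ∀ x y : ℂ, ‖x‖ - ‖y‖ ≤ ‖(x - y)‖ := by
    intro x y; simpa using norm_sub_norm_le x y
  -- cast recurrences to ℂ
  have hv0 : ((V 0 : GaussianInt) : ℂ) = 1 := by rw [hV0, toComplex_one]
  have hv1 : ((V 1 : GaussianInt) : ℂ) = 2 * z - 1 := by
    rw [hV1]; simp +zetaDelta [toComplex_sub, toComplex_mul, toComplex_one, map_ofNat]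
  have hvrec : ∀ p, ((V (p + 2) : GaussianInt) : ℂ) = 2 * z * (V (p + 1) : ℂ) - (V p : ℂ) := by
    intro p; rw [hVrec]; simp +zetaDelta [toComplex_sub, toComplex_mul, map_ofNat]
  have hw0 : ((W 0 : GaussianInt) : ℂ) = 1 := by rw [hW0, toComplex_one]
  have hw1 : ((W 1 : GaussianInt) : ℂ) = 4 * z ^ 2 - z - 2 := by
    rw [hW1]; simp +zetaDelta [toComplex_sub, toComplex_mul, map_ofNat, map_pow]
  have hwrec : ∀ p, ((W (p + 2) : GaussianInt) : ℂ)
      = 2 * (4 * z ^ 2 - 2 * z - 1) * (W (p + 1) : ℂ) - (W p : ℂ) := by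
    intro p; rw [hWrec]
    simp +zetaDelta [toComplex_sub, toComplex_mul, map_ofNat, map_pow, toComplex_one]
  -- abs computations
  have hA2z : ∀ x : ℂ, ‖(2 * z * x)‖ = 2 * r * ‖x‖ := by
    intro x; rw [norm_mul, norm_mul]; simp +zetaDelta
  have hrpos : (0 : ℝ) < r := by linarith
  -- bounds on the W-coefficient c = 2*(4z²-2z-1)
  have hc_low : 8 * r ^ 2 - 4 * r - 2 ≤ ‖(2 * (4 * z ^ 2 - 2 * z - 1))‖ := by
    have e : (2 * (4 * z ^ 2 - 2 * z - 1) : ℂ) = 8 * z ^ 2 - (4 * z + 2) := by ring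
    rw [e]
    have h1 := hle_sub (8 * z ^ 2) (4 * z + 2)
    have h2 : ‖(8 * z ^ 2)‖ = 8 * r ^ 2 := by
      rw [norm_mul, norm_pow]; simp +zetaDelta
    have h3 : ‖(4 * z + 2)‖ ≤ 4 * r + 2 := by
      have := habs_add (4 * z) 2
      have h4 : ‖(4 * z)‖ = 4 * r := by rw [norm_mul]; simp +zetaDelta
      simpa [h4] using this
    linarith
  have hc_high : ‖(2 * (4 * z ^ 2 - 2 * z - 1))‖ ≤ 8 * r ^ 2 + 4 * r + 2 := by
    have e : (2 * (4 * z ^ 2 - 2 * z - 1) : ℂ) = 8 * z ^ 2 - (4 * z + 1 * 2) := by ring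
    rw [e]
    have h1 := habs_sub (8 * z ^ 2) (4 * z + 1 * 2)
    have h2 : ‖(8 * z ^ 2)‖ = 8 * r ^ 2 := by rw [norm_mul, norm_pow]; simp +zetaDelta
    have h3 : ‖(4 * z + 1 * 2)‖ ≤ 4 * r + 2 := by
      have := habs_add (4 * z) (1 * 2)
      have h4 : ‖(4 * z)‖ = 4 * r := by rw [norm_mul]; simp +zetaDelta
      have h5 : ‖((1 : ℂ) * 2)‖ = 2 := by norm_num
      simpa [h4, h5] using this
    linarith
  -- bounds on |W 1|
  have hw1_low : 4 * r ^ 2 - r - 2 ≤ ‖((W 1 : GaussianInt) : ℂ)‖ := by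
    rw [hw1]
    have e : (4 * z ^ 2 - z - 2 : ℂ) = 4 * z ^ 2 - (z + 2) := by ring
    rw [e]
    have h1 := hle_sub (4 * z ^ 2) (z + 2)
    have h2 : ‖(4 * z ^ 2)‖ = 4 * r ^ 2 := by rw [norm_mul, norm_pow]; simp +zetaDelta
    have h3 : ‖(z + 2)‖ ≤ r + 2 := by
      have := habs_add z 2; simpa using this
    linarith
  have hw1_high : ‖((W 1 : GaussianInt) : ℂ)‖ ≤ 4 * r ^ 2 + r + 2 := by
    rw [hw1]
    have e : (4 * z ^ 2 - z - 2 : ℂ) = 4 * z ^ 2 - (z + 1 * 2) := by ring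
    rw [e]
    have h1 := habs_sub (4 * z ^ 2) (z + 1 * 2)
    have h2 : ‖(4 * z ^ 2)‖ = 4 * r ^ 2 := by rw [norm_mul, norm_pow]; simp +zetaDelta
    have h3 : ‖(z + 1 * 2)‖ ≤ r + 2 := by
      have := habs_add z (1 * 2)
      have h5 : ‖((1 : ℂ) * 2)‖ = 2 := by norm_num
      simpa [h5] using this
    linarith
  -- V ratio bound
  have hVr : ∀ p, (2 * r - 1) * ‖((V p : GaussianInt) : ℂ)‖
      ≤ ‖((V (p + 1) : GaussianInt) : ℂ)‖ := by
    intro p; induction p with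
    | zero =>
      rw [hv0, hv1, norm_one]
      have e : (2 * z - 1 : ℂ) = 2 * z - 1 := rfl
      have h1 := hle_sub (2 * z) 1
      have h2 : ‖(2 * z)‖ = 2 * r := by rw [norm_mul]; simp +zetaDelta
      simp only [norm_one] at h1
      rw [h2] at h1; linarith
    | succ p ih =>
      have h1 : ‖(2 * z * ((V (p + 1) : GaussianInt) : ℂ))‖ - ‖((V p : GaussianInt) : ℂ)‖
          ≤ ‖((V (p + 2) : GaussianInt) : ℂ)‖ := by
        rw [hvrec p]; exact hle_sub _ _
      rw [hA2z] at h1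
      have h3 := norm_nonneg ((V p : GaussianInt) : ℂ)
      nlinarith [mul_nonneg (by linarith : (0:ℝ) ≤ 2 * r - 2) h3]
  -- V lower bound
  have hVlow : ∀ p, (2 * r - 1) ^ p ≤ ‖((V p : GaussianInt) : ℂ)‖ := by
    intro p; induction p with
    | zero => simp [hv0]
    | succ p ih =>
      have h1 := hVr p
      have h2 : (2 * r - 1) * (2 * r - 1) ^ p ≤ (2 * r - 1) * ‖((V p : GaussianInt) : ℂ)‖ :=
        mul_le_mul_of_nonneg_left ih (by linarith)
      calc (2 * r - 1) ^ (p + 1) = (2 * r - 1) * (2 * r - 1) ^ p := by ring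
        _ ≤ _ := le_trans h2 h1
  -- V upper bound (paired induction)
  have hVhigh : ∀ p, ‖((V p : GaussianInt) : ℂ)‖ ≤ (2 * r + 1) ^ p ∧
      ‖((V (p + 1) : GaussianInt) : ℂ)‖ ≤ (2 * r + 1) ^ (p + 1) := by
    intro p; induction p with
    | zero =>
      constructor
      · simp [hv0]
      · rw [hv1]
        have h1 := habs_sub (2 * z) 1
        have h2 : ‖(2 * z)‖ = 2 * r := by rw [norm_mul]; simp +zetaDelta
        simp only [norm_one] at h1
        rw [h2] at h1; simpa using h1
    | succ p ih =>
      obtain ⟨ih1, ih2⟩ := ih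
      refine ⟨ih2, ?_⟩
      have h1 : ‖((V (p + 2) : GaussianInt) : ℂ)‖
          ≤ 2 * r * ‖((V (p + 1) : GaussianInt) : ℂ)‖ + ‖((V p : GaussianInt) : ℂ)‖ := by
        rw [hvrec p]
        have := habs_sub (2 * z * ((V (p + 1) : GaussianInt) : ℂ)) ((V p : GaussianInt) : ℂ)
        rwa [hA2z] at this
      have hp : (0 : ℝ) ≤ (2 * r + 1) ^ p := by positivity
      have e1 : (2 * r + 1) ^ (p + 1) = (2 * r + 1) ^ p * (2 * r + 1) := pow_succ _ _
      have e2 : (2 * r + 1) ^ (p + 2) = (2 * r + 1) ^ p * (2 * r + 1) * (2 * r + 1) := by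
        rw [pow_succ, pow_succ]
      rw [e2]; rw [e1] at ih2
      nlinarith [norm_nonneg ((V (p+1) : GaussianInt) : ℂ)]
  -- W ratio bound (from index 1)
  have hWr : ∀ p, (8 * r ^ 2 - 4 * r - 3) * ‖((W (p + 1) : GaussianInt) : ℂ)‖
      ≤ ‖((W (p + 2) : GaussianInt) : ℂ)‖ := by
    intro p; induction p with
    | zero =>
      have h1 : ‖(2 * (4 * z ^ 2 - 2 * z - 1) * ((W 1 : GaussianInt) : ℂ))‖
          - ‖((W 0 : GaussianInt) : ℂ)‖ ≤ ‖((W 2 : GaussianInt) : ℂ)‖ := by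
        rw [hwrec 0]; exact hle_sub _ _
      rw [norm_mul, hw0, norm_one] at h1
      have h2 := mul_le_mul_of_nonneg_right hc_low (norm_nonneg ((W 1 : GaussianInt) : ℂ))
      nlinarith
    | succ p ih =>
      have h1 : ‖(2 * (4 * z ^ 2 - 2 * z - 1) * ((W (p + 2) : GaussianInt) : ℂ))‖
          - ‖((W (p + 1) : GaussianInt) : ℂ)‖ ≤ ‖((W (p + 3) : GaussianInt) : ℂ)‖ := by
        rw [hwrec (p + 1)]; exact hle_sub _ _
      rw [norm_mul] at h1
      have h2 := mul_le_mul_of_nonneg_right hc_low (norm_nonneg ((W (p + 2) : GaussianInt) : ℂ))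
      have h3 := norm_nonneg ((W (p + 1) : GaussianInt) : ℂ)
      nlinarith [mul_nonneg (by nlinarith : (0:ℝ) ≤ 8 * r ^ 2 - 4 * r - 4) h3]
  -- W lower bound
  have hWlow : ∀ p, (4 * r ^ 2 - r - 2) * (8 * r ^ 2 - 4 * r - 3) ^ p
      ≤ ‖((W (p + 1) : GaussianInt) : ℂ)‖ := by
    intro p; induction p with
    | zero => simpa using hw1_low
    | succ p ih =>
      have h1 := hWr p
      have h2 : (8 * r ^ 2 - 4 * r - 3) * ((4 * r ^ 2 - r - 2) * (8 * r ^ 2 - 4 * r - 3) ^ p)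
          ≤ (8 * r ^ 2 - 4 * r - 3) * ‖((W (p + 1) : GaussianInt) : ℂ)‖ :=
        mul_le_mul_of_nonneg_left ih (by nlinarith)
      calc (4 * r ^ 2 - r - 2) * (8 * r ^ 2 - 4 * r - 3) ^ (p + 1)
          = (8 * r ^ 2 - 4 * r - 3) * ((4 * r ^ 2 - r - 2) * (8 * r ^ 2 - 4 * r - 3) ^ p) := by
            ring
        _ ≤ _ := le_trans h2 h1
  -- W upper bound (paired induction)
  have hWhigh : ∀ p, ‖((W p : GaussianInt) : ℂ)‖ ≤ (8 * r ^ 2 + 4 * r + 3) ^ p ∧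
      ‖((W (p + 1) : GaussianInt) : ℂ)‖ ≤ (8 * r ^ 2 + 4 * r + 3) ^ (p + 1) := by
    intro p; induction p with
    | zero =>
      refine ⟨by simp [hw0], ?_⟩
      have : (8 * r ^ 2 + 4 * r + 3 : ℝ) ^ 1 = 8 * r ^ 2 + 4 * r + 3 := pow_one _
      rw [this]; nlinarith
    | succ p ih =>
      obtain ⟨ih1, ih2⟩ := ih
      refine ⟨ih2, ?_⟩
      have h1 : ‖((W (p + 2) : GaussianInt) : ℂ)‖
          ≤ ‖(2 * (4 * z ^ 2 - 2 * z - 1))‖ * ‖((W (p + 1) : GaussianInt) : ℂ)‖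
            + ‖((W p : GaussianInt) : ℂ)‖ := by
        rw [hwrec p]
        have := habs_sub (2 * (4 * z ^ 2 - 2 * z - 1) * ((W (p + 1) : GaussianInt) : ℂ))
          ((W p : GaussianInt) : ℂ)
        rwa [norm_mul] at this
      have hp : (0 : ℝ) ≤ (8 * r ^ 2 + 4 * r + 3) ^ p := by positivity
      have e1 : (8 * r ^ 2 + 4 * r + 3 : ℝ) ^ (p + 1)
          = (8 * r ^ 2 + 4 * r + 3) ^ p * (8 * r ^ 2 + 4 * r + 3) := pow_succ _ _
      have e2 : (8 * r ^ 2 + 4 * r + 3 : ℝ) ^ (p + 2)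
          = (8 * r ^ 2 + 4 * r + 3) ^ p * (8 * r ^ 2 + 4 * r + 3) * (8 * r ^ 2 + 4 * r + 3) := by
        rw [pow_succ, pow_succ]
      rw [e2]; rw [e1] at ih2
      have h4 := norm_nonneg ((W (p + 1) : GaussianInt) : ℂ)
      nlinarith [mul_le_mul_of_nonneg_right hc_high h4]
  -- the equality of absolute values
  have heq : ‖((V n : GaussianInt) : ℂ)‖ = ‖((W m : GaussianInt) : ℂ)‖ := by
    rcases h with h | h
    · rw [h]
    · rw [h, toComplex_neg, norm_neg]
  constructor
  · -- m ≤ n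
    rcases m with _ | m'
    · exact Nat.zero_le n
    · have hE : (2 * r + 1 : ℝ) ≤ 4 * r ^ 2 - r - 2 := by nlinarith
      have hD : ((2 * r + 1 : ℝ)) ^ 2 ≤ 8 * r ^ 2 - 4 * r - 3 := by nlinarith
      have h1 : (((2 * r + 1 : ℝ)) ^ 2) ^ m' ≤ (8 * r ^ 2 - 4 * r - 3) ^ m' :=
        pow_le_pow_left₀ (by positivity) hD m'
      have h2 : (2 * r + 1) * ((2 * r + 1 : ℝ) ^ 2) ^ m'
          ≤ (4 * r ^ 2 - r - 2) * (8 * r ^ 2 - 4 * r - 3) ^ m' :=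
        mul_le_mul hE h1 (by positivity) (by nlinarith [sq_nonneg (r - 2.5)])
      have h3 : (2 * r + 1 : ℝ) ^ (2 * m' + 1) ≤ (2 * r + 1) ^ n := by
        have e : (2 * r + 1 : ℝ) ^ (2 * m' + 1) = (2 * r + 1) * ((2 * r + 1) ^ 2) ^ m' := by
          rw [pow_succ, pow_mul]; ring
        rw [e]
        calc (2 * r + 1) * ((2 * r + 1 : ℝ) ^ 2) ^ m'
            ≤ (4 * r ^ 2 - r - 2) * (8 * r ^ 2 - 4 * r - 3) ^ m' := h2
          _ ≤ ‖((W (m' + 1) : GaussianInt) : ℂ)‖ := hWlow m'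
          _ = ‖((V n : GaussianInt) : ℂ)‖ := heq.symm
          _ ≤ (2 * r + 1) ^ n := (hVhigh n).1
      have h4 : 2 * m' + 1 ≤ n := by
        exact (pow_le_pow_iff_right₀ (by linarith : (1:ℝ) < 2 * r + 1)).mp h3
      omega
  · -- n ≤ 3m + 2
    have hC : (8 * r ^ 2 + 4 * r + 3 : ℝ) ≤ (2 * r - 1) ^ 3 := by nlinarith [mul_nonneg (mul_nonneg hrpos.le hrpos.le) (by linarith : (0:ℝ) ≤ 2 * r - 5)]
    have h1 : ((8 * r ^ 2 + 4 * r + 3 : ℝ)) ^ m ≤ ((2 * r - 1) ^ 3) ^ m :=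
      pow_le_pow_left₀ (by positivity) hC m
    have h3 : (2 * r - 1 : ℝ) ^ n ≤ (2 * r - 1) ^ (3 * m) := by
      calc (2 * r - 1 : ℝ) ^ n ≤ ‖((V n : GaussianInt) : ℂ)‖ := hVlow n
        _ = ‖((W m : GaussianInt) : ℂ)‖ := heq
        _ ≤ (8 * r ^ 2 + 4 * r + 3) ^ m := (hWhigh m).1
        _ ≤ ((2 * r - 1) ^ 3) ^ m := h1
        _ = (2 * r - 1) ^ (3 * m) := by rw [← pow_mul]
    have h4 : n ≤ 3 * m := by
      exact (pow_le_pow_iff_right₀ (by linarith : (1:ℝ) < 2 * r - 1)).mp h3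
    omega
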